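/- If ω_0, ..., ω_n satisfy the system ω_i' + ω_{i+1}' = -(ω_i - ω_{i+1})(ω_i - ω_{i+1} - t) - Σ_{k=1}^{n} (n+1-k) a_{i+k} (indices mod n+1), then the variables g_i := ω_i - ω_{i+1} - t/2 satisfy the periodic dressing chain with period n+1: g_{i+1}' + g_i' = g_{i+1}² - g_i² - (n+1) a_{i+1}. -/

import Mathlib

open Finset
open Fin.NatCast

/-- Telescoping identity for the coefficient sums. -/
lemma dressing_key_sum (n : ℕ) (a : Fin (n + 1) → ℂ)
    (ha : ∑ i : Fin (n + 1), a i = 1) (i : Fin (n + 1)) :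
    ∑ k ∈ Icc 1 n, ((n + 1 - k : ℕ) : ℂ) * a (i + 1 + (k : Fin (n + 1)))
      - ∑ k ∈ Icc 1 n, ((n + 1 - k : ℕ) : ℂ) * a (i + (k : Fin (n + 1)))
      = 1 - ((n : ℂ) + 1) * a (i + 1) := by
  set b : ℕ → ℂ := fun k => a (i + (k : Fin (n + 1))) with hb
  have hcast : ∀ k : ℕ, ((k + 1 : ℕ) : Fin (n + 1)) = (k : Fin (n + 1)) + 1 := by
    intro k; push_cast; open Fin.CommRing in ring
  have hshift : ∀ k : ℕ, a (i + 1 + (k : Fin (n + 1))) = b (k + 1) := by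
    intro k
    simp only [hb, hcast]
    open Fin.CommRing in ring_nf
  have hb1 : b 1 = a (i + 1) := by simp [hb]
  have hbn : b (n + 1) = b 0 := by simp [hb]
  -- sum of b over a full period is 1
  have hsum1 : ∑ j ∈ range (n + 1), b j = 1 := by
    rw [← Fin.sum_univ_eq_sum_range]
    rw [← ha]
    refine Fintype.sum_equiv (Equiv.addLeft i) _ _ ?_
    intro x
    simp [hb, Equiv.addLeft]
  -- shifted period sums
  have hsum2 : ∑ j ∈ range (n + 1), b (j + 1) = 1 := by
    have h1 : ∑ j ∈ range (n + 2), b j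
        = (∑ j ∈ range (n + 1), b (j + 1)) + b 0 := Finset.sum_range_succ' b (n + 1)
    have h2 : ∑ j ∈ range (n + 2), b j
        = (∑ j ∈ range (n + 1), b j) + b (n + 1) := Finset.sum_range_succ b (n + 1)
    rw [h2, hsum1, hbn] at h1
    linear_combination -h1
  have hsum3 : ∑ j ∈ range n, b (j + 2) = 1 - b 1 := by
    have h := Finset.sum_range_succ' (fun j => b (j + 1)) n
    rw [hsum2] at h
    have e : ∀ k : ℕ, k + 1 + 1 = k + 2 := fun k => rfl
    simp only [e, Nat.zero_add] at h
    linear_combination -h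
  set G : ℕ → ℂ := fun m => ((n : ℂ) - m) * b (m + 1) with hG
  have step1 : ∑ k ∈ Icc 1 n, ((n + 1 - k : ℕ) : ℂ) * a (i + 1 + (k : Fin (n + 1)))
      - ∑ k ∈ Icc 1 n, ((n + 1 - k : ℕ) : ℂ) * a (i + (k : Fin (n + 1)))
      = ∑ k ∈ Icc 1 n, (((n + 1 - k : ℕ) : ℂ) * b (k + 1) - ((n + 1 - k : ℕ) : ℂ) * b k) := by
    rw [← Finset.sum_sub_distrib]
    refine Finset.sum_congr rfl fun k _ => ?_
    rw [hshift]
  rw [step1, ← Finset.Ico_add_one_right_eq_Icc, Finset.sum_Ico_eq_sum_range]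
  norm_num
  have hmain : ∀ m ∈ range n,
      ((n + 1 - (1 + m) : ℕ) : ℂ) * b (1 + m + 1) - ((n + 1 - (1 + m) : ℕ) : ℂ) * b (1 + m)
        = (G (m + 1) - G m) + b (m + 2) := by
    intro m hm
    have hm' : m < n := mem_range.mp hm
    have hc : ((n + 1 - (1 + m) : ℕ) : ℂ) = (n : ℂ) - m := by
      have e : n + 1 - (1 + m) = n - m := by omega
      rw [e, Nat.cast_sub hm'.le]
    have e1 : 1 + m + 1 = m + 2 := by omega
    have e2 : 1 + m = m + 1 := by omega
    rw [hc, e1, e2, hG]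
    push_cast
    ring
  rw [← Finset.sum_sub_distrib, Finset.sum_congr rfl hmain, Finset.sum_add_distrib,
    Finset.sum_range_sub, hsum3]
  have hGn : G n = 0 := by simp [hG]
  have hG0 : G 0 = (n : ℂ) * b 1 := by simp [hG]
  rw [hGn, hG0, hb1]
  ring

theorem dressing_chain_reduction (n : ℕ) (hn : 2 ≤ n)
    (ω : Fin (n + 1) → ℂ → ℂ) (dω : Fin (n + 1) → ℂ → ℂ) (a : Fin (n + 1) → ℂ)
    (ha : ∑ i : Fin (n + 1), a i = 1)
    (hd : ∀ (i : Fin (n + 1)) (t : ℂ), HasDerivAt (ω i) (dω i t) t)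
    (hsys : ∀ (i : Fin (n + 1)) (t : ℂ),
      dω i t + dω (i + 1) t
        = -(ω i t - ω (i + 1) t) * (ω i t - ω (i + 1) t - t)
          - ∑ k ∈ Icc 1 n, ((n + 1 - k : ℕ) : ℂ) * a (i + Fin.ofNat (n + 1) k)) :
    ∀ (i : Fin (n + 1)) (t : ℂ),
      HasDerivAt
        (fun u => (ω (i + 1) u - ω (i + 2) u - u / 2) + (ω i u - ω (i + 1) u - u / 2))
        ((ω (i + 1) t - ω (i + 2) t - t / 2) ^ 2 - (ω i t - ω (i + 1) t - t / 2) ^ 2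
          - ((n : ℂ) + 1) * a (i + 1)) t := by
  intro i t
  have hi : i + 1 + 1 = i + 2 := by open Fin.CommRing in ring
  have e0 := hsys i t
  have e1 := hsys (i + 1) t
  rw [hi] at e1
  simp only [show ∀ k : ℕ, Fin.ofNat (n + 1) k = (k : Fin (n + 1)) from fun k => rfl] at e0 e1
  have key := dressing_key_sum n a ha i
  have H := (((hd (i + 1) t).sub (hd (i + 2) t)).sub ((hasDerivAt_id t).div_const 2)).add
    (((hd i t).sub (hd (i + 1) t)).sub ((hasDerivAt_id t).div_const 2))
  refine H.congr_deriv ?_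
  linear_combination -(e1 - e0 - key)
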